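/- Let k, m, n be nonnegative integers with m odd, k+m ≤ n, Z an n×(k+m) matrix with positive maximal minors, C a k×n matrix with positive maximal minors, Y = CZ. Then for any list I = (i_1, i_1+1, ..., i_{(m−1)/2}, i_{(m−1)/2}+1) of m−1 strictly increasing integers in [2, n], we have (−1)^k ⟨Y, 1, I⟩ > 0; and for any such list I with entries in [1, n−1], we have ⟨Y, I, n⟩ > 0. -/

import Mathlib

/-- Twistor coordinate. -/
noncomputable def twistor {k m n : ℕ} (Z : Matrix (Fin n) (Fin (k + m)) ℝ)
    (Y : Matrix (Fin k) (Fin (k + m)) ℝ) (L : Fin m → Fin n) : ℝ :=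
  Matrix.det (Matrix.of fun i j : Fin k ⊕ Fin m =>
    Sum.elim (fun a => Y a) (fun b => Z (L b)) i (finSumFinEquiv j))

def PosMaximalMinors {n p : ℕ} (Z : Matrix (Fin n) (Fin p) ℝ) : Prop :=
  ∀ f : Fin p → Fin n, StrictMono f → 0 < Matrix.det (Matrix.of fun a b => Z (f a) b)

def PosRowMinors {k n : ℕ} (C : Matrix (Fin k) (Fin n) ℝ) : Prop :=
  ∀ g : Fin k → Fin n, StrictMono g → 0 < Matrix.det (Matrix.of fun a b => C a (g b))

def ConsecPairs {m n : ℕ} (I : Fin m → Fin n) : Prop :=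
  ∀ a b : Fin m, (a : ℕ) + 1 = (b : ℕ) → (a : ℕ) % 2 = 0 → (I b : ℕ) = (I a : ℕ) + 1

namespace Stmt9Aux
open Finset Matrix Equiv


variable {N n : ℕ}

/-- Number of inversions of a tuple. -/
def inv (t : Fin N → Fin n) : ℕ :=
  ((Finset.univ : Finset (Fin N × Fin N)).filter fun p => p.1 < p.2 ∧ t p.2 < t p.1).card

lemma inv_eq_zero_of_strictMono {t : Fin N → Fin n} (h : StrictMono t) : inv t = 0 := by
  rw [inv, Finset.card_eq_zero, Finset.filter_eq_empty_iff]
  rintro p - ⟨h1, h2⟩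
  exact absurd (h h1) (not_lt.2 h2.le)

lemma swap_lt {a b : Fin N} (hb : (a : ℕ) + 1 = (b : ℕ)) {p q : Fin N}
    (hpq : p < q) (hne : (p, q) ≠ (a, b)) :
    Equiv.swap a b p < Equiv.swap a b q := by
  have h1 : (p : ℕ) < (q : ℕ) := hpq
  have h2 : ¬((p : ℕ) = (a : ℕ) ∧ (q : ℕ) = (b : ℕ)) := by
    intro ⟨hp, hq⟩
    exact hne (by rw [Prod.ext_iff]; exact ⟨Fin.ext hp, Fin.ext hq⟩)
  simp only [Equiv.swap_apply_def, Fin.lt_def]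
  split_ifs <;> simp_all [Fin.ext_iff] <;> omega

lemma inv_swap_add_one {t : Fin N → Fin n} {a b : Fin N} (hb : (a : ℕ) + 1 = (b : ℕ))
    (hd : t b < t a) : inv (t ∘ Equiv.swap a b) + 1 = inv t := by
  classical
  have hlt : a < b := by rw [Fin.lt_def]; omega
  set S := (Finset.univ : Finset (Fin N × Fin N)).filter
      fun p => p.1 < p.2 ∧ t p.2 < t p.1 with hS
  set S' := (Finset.univ : Finset (Fin N × Fin N)).filter
      fun p => p.1 < p.2 ∧ (t ∘ Equiv.swap a b) p.2 < (t ∘ Equiv.swap a b) p.1 with hS'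
  have hdS : (a, b) ∈ S := by simp [hS, hlt, hd]
  have hcard : (S.erase (a, b)).card = S'.card := by
    refine Finset.card_bij' (fun p _ => (Equiv.swap a b p.1, Equiv.swap a b p.2))
      (fun q _ => (Equiv.swap a b q.1, Equiv.swap a b q.2)) ?_ ?_ ?_ ?_
    · rintro p hp
      obtain ⟨hpd, hpS⟩ := Finset.mem_erase.1 hp
      rw [hS, Finset.mem_filter] at hpS
      obtain ⟨-, hp1, hp2⟩ := hpS
      rw [hS', Finset.mem_filter]
      refine ⟨Finset.mem_univ _, swap_lt hb hp1 (by simpa using hpd), ?_⟩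
      simpa [Equiv.swap_apply_self] using hp2
    · rintro q hq
      rw [hS', Finset.mem_filter] at hq
      obtain ⟨-, hq1, hq2⟩ := hq
      simp only [Function.comp_apply] at hq2
      have hqd : (q.1, q.2) ≠ (a, b) := by
        rintro h
        rw [Prod.ext_iff] at h
        obtain ⟨e1, e2⟩ := h
        simp only at e1 e2
        rw [e1, e2, Equiv.swap_apply_left, Equiv.swap_apply_right] at hq2
        exact absurd hq2 (not_lt.2 hd.le)
      refine Finset.mem_erase.2 ⟨?_, ?_⟩
      · rintro h
        rw [Prod.ext_iff] at h
        obtain ⟨e1, e2⟩ := h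
        simp only at e1 e2
        have : q.1 = b := by
          have := congrArg (Equiv.swap a b) e1
          simpa [Equiv.swap_apply_self] using this
        have : q.2 = a := by
          have := congrArg (Equiv.swap a b) e2
          simpa [Equiv.swap_apply_self] using this
        have hba : q.1 < q.2 := hq1
        rw [‹q.1 = b›, ‹q.2 = a›] at hba
        exact absurd hba (not_lt.2 hlt.le)
      · rw [hS, Finset.mem_filter]
        exact ⟨Finset.mem_univ _, swap_lt hb hq1 (by simpa using hqd), hq2⟩
    · intro p _; simp [Equiv.swap_apply_self]
    · intro q _; simp [Equiv.swap_apply_self]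
  rw [inv, inv, ← hS, ← hS', ← hcard, Finset.card_erase_add_one hdS]

lemma exists_descent {t : Fin N → Fin n} (ht : Function.Injective t) (h : ¬ StrictMono t) :
    ∃ a b : Fin N, (a : ℕ) + 1 = (b : ℕ) ∧ t b < t a := by
  by_contra hc
  push_neg at hc
  apply h
  have adj : ∀ a b : Fin N, (a : ℕ) + 1 = (b : ℕ) → t a < t b := by
    intro a b hab
    rcases lt_trichotomy (t a) (t b) with h' | h' | h'
    · exact h'
    · exact absurd (ht h') (by intro e; rw [e] at hab; omega)
    · exact absurd h' (not_lt.2 (hc a b hab))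
  intro i j hij
  have hij' : (i : ℕ) < (j : ℕ) := hij
  clear hij
  obtain ⟨d, hd⟩ : ∃ d, (j : ℕ) = (i : ℕ) + d + 1 := ⟨(j : ℕ) - (i : ℕ) - 1, by omega⟩
  clear hij'
  induction d generalizing j with
  | zero => exact adj i j (by omega)
  | succ d IH =>
      have hj' : (i : ℕ) + d + 1 < N := by have := j.isLt; omega
      exact (IH (j := ⟨(i : ℕ) + d + 1, hj'⟩) rfl).trans (adj _ j (by simpa using (by omega : (i : ℕ) + d + 1 + 1 = j)))

lemma det_pos_sign {Z : Matrix (Fin n) (Fin N) ℝ}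
    (hZ : ∀ f : Fin N → Fin n, StrictMono f → 0 < (Z.submatrix f id).det) :
    ∀ (v : ℕ) (t : Fin N → Fin n), inv t = v → Function.Injective t →
      0 < (-1 : ℝ) ^ (inv t) * (Z.submatrix t id).det := by
  intro v
  induction v using Nat.strong_induction_on with
  | _ v ih =>
    intro t hv ht
    by_cases hmono : StrictMono t
    · rw [inv_eq_zero_of_strictMono hmono]
      simpa using hZ t hmono
    · obtain ⟨a, b, hab, hd⟩ := exists_descent ht hmono
      have hswap := inv_swap_add_one hab hd
      have hinj' : Function.Injective (t ∘ Equiv.swap a b) :=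
        ht.comp (Equiv.injective _)
      have IH := ih (inv (t ∘ Equiv.swap a b)) (by omega) _ rfl hinj'
      have hne : a ≠ b := by intro e; rw [e] at hab; omega
      have hdet : (Z.submatrix (t ∘ Equiv.swap a b) id).det =
          - (Z.submatrix t id).det := by
        rw [show Z.submatrix (t ∘ ⇑(Equiv.swap a b)) id =
            (Z.submatrix t id).submatrix (⇑(Equiv.swap a b)) id from rfl,
          Matrix.det_permute, Equiv.Perm.sign_swap hne]
        push_cast
        ring
      rw [hdet] at IH
      rw [← hswap, pow_succ]
      nlinarith [IH]


lemma inv_concat {k M : ℕ} {s : Fin k → Fin n} {L : Fin M → Fin n}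
    (hs : StrictMono s) (hL : StrictMono L) :
    inv (fun j : Fin (k + M) => Sum.elim s L (finSumFinEquiv.symm j)) =
      ∑ b : Fin M, ((Finset.univ : Finset (Fin k)).filter fun a => L b < s a).card := by
  classical
  rw [inv, Finset.card_filter]
  rw [← Fintype.sum_equiv (Equiv.prodCongr finSumFinEquiv finSumFinEquiv)
      (fun q : (Fin k ⊕ Fin M) × (Fin k ⊕ Fin M) =>
        if (finSumFinEquiv q.1 < finSumFinEquiv q.2 ∧ Sum.elim s L q.2 < Sum.elim s L q.1)
          then (1 : ℕ) else 0)
      (fun p : Fin (k + M) × Fin (k + M) =>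
        if (p.1 < p.2 ∧ Sum.elim s L (finSumFinEquiv.symm p.2) <
            Sum.elim s L (finSumFinEquiv.symm p.1)) then 1 else 0)
      (fun q => by simp)]
  rw [Fintype.sum_prod_type]
  rw [Fintype.sum_sum_type]
  have blockll : ∀ a : Fin k, ∑ x : Fin k ⊕ Fin M,
      (if (finSumFinEquiv (Sum.inl a : Fin k ⊕ Fin M) < finSumFinEquiv x ∧
          Sum.elim s L x < Sum.elim s L (Sum.inl a)) then (1:ℕ) else 0) =
      ∑ b : Fin M, (if L b < s a then 1 else 0) := by
    intro a
    rw [Fintype.sum_sum_type]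
    have h1 : ∀ a' : Fin k,
        (if (finSumFinEquiv (Sum.inl a : Fin k ⊕ Fin M) < finSumFinEquiv (Sum.inl a' : Fin k ⊕ Fin M) ∧
          Sum.elim s L (Sum.inl a') < Sum.elim s L (Sum.inl a)) then (1:ℕ) else 0) = 0 := by
      intro a'
      rw [if_neg]
      rintro ⟨h1, h2⟩
      simp only [finSumFinEquiv_apply_left, Sum.elim_inl, Fin.lt_def, Fin.coe_castAdd] at h1 h2
      have : a < a' := h1
      exact absurd (hs this) (not_lt.2 h2.le)
    have h2 : ∀ b : Fin M,
        (if (finSumFinEquiv (Sum.inl a : Fin k ⊕ Fin M) < finSumFinEquiv (Sum.inr b : Fin k ⊕ Fin M) ∧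
          Sum.elim s L (Sum.inr b) < Sum.elim s L (Sum.inl a)) then (1:ℕ) else 0) =
        (if L b < s a then 1 else 0) := by
      intro b
      have hcn : finSumFinEquiv (Sum.inl a : Fin k ⊕ Fin M) < finSumFinEquiv (Sum.inr b : Fin k ⊕ Fin M) := by
        simp only [finSumFinEquiv_apply_left, finSumFinEquiv_apply_right, Fin.lt_def,
          Fin.coe_castAdd, Fin.coe_natAdd]
        omega
      simp only [Sum.elim_inl, Sum.elim_inr]
      simp only [hcn, true_and]
    simp only [h1, h2, Finset.sum_const_zero, zero_add]
  have blockrr : ∀ b : Fin M, ∑ x : Fin k ⊕ Fin M,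
      (if (finSumFinEquiv (Sum.inr b : Fin k ⊕ Fin M) < finSumFinEquiv x ∧
          Sum.elim s L x < Sum.elim s L (Sum.inr b)) then (1:ℕ) else 0) = 0 := by
    intro b
    rw [Fintype.sum_sum_type]
    have h1 : ∀ a : Fin k,
        (if (finSumFinEquiv (Sum.inr b : Fin k ⊕ Fin M) < finSumFinEquiv (Sum.inl a : Fin k ⊕ Fin M) ∧
          Sum.elim s L (Sum.inl a) < Sum.elim s L (Sum.inr b)) then (1:ℕ) else 0) = 0 := by
      intro a
      rw [if_neg]
      rintro ⟨h1, -⟩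
      simp only [finSumFinEquiv_apply_left, finSumFinEquiv_apply_right, Fin.lt_def,
        Fin.coe_castAdd, Fin.coe_natAdd] at h1
      omega
    have h2 : ∀ b' : Fin M,
        (if (finSumFinEquiv (Sum.inr b : Fin k ⊕ Fin M) < finSumFinEquiv (Sum.inr b' : Fin k ⊕ Fin M) ∧
          Sum.elim s L (Sum.inr b') < Sum.elim s L (Sum.inr b)) then (1:ℕ) else 0) = 0 := by
      intro b'
      rw [if_neg]
      rintro ⟨h1, h2⟩
      simp only [finSumFinEquiv_apply_right, Sum.elim_inr, Fin.lt_def, Fin.coe_natAdd] at h1 h2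
      have : b < b' := by rw [Fin.lt_def]; omega
      exact absurd (hL this) (not_lt.2 h2.le)
    simp only [h1, h2, Finset.sum_const_zero, add_zero]
  rw [Fintype.sum_congr _ _ blockll, Fintype.sum_congr _ _ blockrr]
  simp only [Finset.sum_const_zero, add_zero]
  rw [Finset.sum_comm]
  congr 1
  funext b
  rw [Finset.card_filter]

lemma even_sum_of_pairs : ∀ (m : ℕ), m % 2 = 0 → ∀ (d : Fin m → ℕ),
    (∀ j j' : Fin m, (j : ℕ) % 2 = 0 → (j : ℕ) + 1 = (j' : ℕ) → d j = d j') →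
    (∑ j, d j) % 2 = 0 := by
  intro m
  induction m using Nat.strong_induction_on with
  | _ m ih =>
    intro hm d hd
    match m, hm with
    | 0, _ => simp
    | (m' + 2), hm =>
      rw [Fin.sum_univ_castSucc, Fin.sum_univ_castSucc]
      have hpair : d ((Fin.last m').castSucc) = d (Fin.last (m' + 1)) := by
        apply hd
        · simp [Fin.last]; omega
        · simp [Fin.last]
      have hrec : (∑ j : Fin m', d (j.castSucc.castSucc)) % 2 = 0 := ih m' (by omega) (by omega)
        (fun j => d (j.castSucc.castSucc))
        (fun j j' h1 h2 => hd _ _ (by simpa using h1) (by simpa using h2))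
      omega



variable {k M n : ℕ}

lemma twistor_expand (Z : Matrix (Fin n) (Fin (k + M)) ℝ) (C : Matrix (Fin k) (Fin n) ℝ)
    (L : Fin M → Fin n) :
    twistor Z (C * Z) L = ∑ g : Fin k → Fin n, (∏ a, C a (g a)) *
      (Matrix.of fun i j : Fin k ⊕ Fin M => Z (Sum.elim g L i) (finSumFinEquiv j)).det := by
  classical
  set R : Fin n → (Fin k ⊕ Fin M) → ℝ := fun x j => Z x (finSumFinEquiv j) with hR
  set A : (Fin k ⊕ Fin M) → Fin n → ℝ :=
    Sum.elim (fun a x => C a x) (fun b x => if x = L b then 1 else 0) with hA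
  have hrow : (fun i => (Matrix.of fun i j : Fin k ⊕ Fin M =>
        Sum.elim (fun a => (C * Z) a) (fun b => Z (L b)) i (finSumFinEquiv j)) i)
      = fun i => ∑ x : Fin n, A i x • R x := by
    funext i
    cases i with
    | inl a =>
        funext j
        simp [hA, hR, Matrix.mul_apply, Finset.sum_apply]
    | inr b =>
        funext j
        simp [hA, hR, Finset.sum_apply, ite_smul,
          apply_ite (fun f : (Fin k ⊕ Fin M) → ℝ => f j)]
  have step1 : twistor Z (C * Z) L =
      Matrix.detRowAlternating (R := ℝ) (n := Fin k ⊕ Fin M)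
        (fun i => ∑ x : Fin n, A i x • R x) := by
    rw [twistor, ← hrow]
    rfl
  rw [step1]
  have hms : (Matrix.detRowAlternating (R := ℝ) (n := Fin k ⊕ Fin M)
        (fun i => ∑ x : Fin n, A i x • R x))
      = ∑ r : Fin k ⊕ Fin M → Fin n,
          Matrix.detRowAlternating (R := ℝ) (n := Fin k ⊕ Fin M)
            (fun i => A i (r i) • R (r i)) := by
    simpa using (Matrix.detRowAlternating (R := ℝ)
      (n := Fin k ⊕ Fin M)).toMultilinearMap.map_sum (fun i x => A i x • R x)
  rw [hms]
  have step2 : ∀ r : Fin k ⊕ Fin M → Fin n,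
      Matrix.detRowAlternating (R := ℝ) (n := Fin k ⊕ Fin M)
          (fun i => A i (r i) • R (r i))
        = (∏ i, A i (r i)) *
          Matrix.detRowAlternating (R := ℝ) (n := Fin k ⊕ Fin M) (fun i => R (r i)) := by
    intro r
    have := (Matrix.detRowAlternating (R := ℝ)
      (n := Fin k ⊕ Fin M)).toMultilinearMap.map_smul_univ (fun i => A i (r i)) (fun i => R (r i))
    simpa [smul_eq_mul] using this
  rw [Fintype.sum_congr _ _ step2]
  rw [← Fintype.sum_equiv (Equiv.sumArrowEquivProdArrow (Fin k) (Fin M) (Fin n)).symm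
      (fun p : (Fin k → Fin n) × (Fin M → Fin n) =>
        (∏ i, A i (Sum.elim p.1 p.2 i)) *
          Matrix.detRowAlternating (R := ℝ) (n := Fin k ⊕ Fin M)
            (fun i => R (Sum.elim p.1 p.2 i)))
      _ (fun p => rfl)]
  rw [Fintype.sum_prod_type]
  refine Finset.sum_congr rfl fun g _ => ?_
  rw [Finset.sum_eq_single L]
  · have h1 : (∏ i, A i (Sum.elim g L i)) = ∏ a, C a (g a) := by
      rw [Fintype.prod_sum_type]
      have : (∏ b : Fin M, A (Sum.inr b) (Sum.elim g L (Sum.inr b))) = 1 :=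
        Finset.prod_eq_one fun b _ => by simp [hA]
      simp only [this, mul_one]
      rfl
    rw [h1]
    rfl
  · intro h _ hne
    have : ∃ b, h b ≠ L b := by
      by_contra hc
      push_neg at hc
      exact hne (funext hc)
    obtain ⟨b, hb⟩ := this
    have : (∏ i, A i (Sum.elim g h i)) = 0 := by
      rw [Fintype.prod_sum_type]
      refine mul_eq_zero.2 (Or.inr ?_)
      exact Finset.prod_eq_zero (Finset.mem_univ b) (by simp [hA, hb])
    rw [this, zero_mul]
  · intro h
    exact absurd (Finset.mem_univ L) h



variable {k M n : ℕ}

lemma strictMono_perm_eq {ρ : Equiv.Perm (Fin k)} (hρ : StrictMono (⇑ρ)) :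
    ∀ x, ρ x = x := by
  intro x
  let oi := StrictMono.orderIsoOfSurjective (⇑ρ) hρ ρ.surjective
  have : oi = OrderIso.refl (Fin k) := Subsingleton.elim _ _
  have h1 : oi x = ρ x := rfl
  rw [this] at h1
  exact h1.symm

lemma twistor_group (Z : Matrix (Fin n) (Fin (k + M)) ℝ) (C : Matrix (Fin k) (Fin n) ℝ)
    (L : Fin M → Fin n) :
    twistor Z (C * Z) L =
      ∑ s ∈ (Finset.univ.filter fun s : Fin k → Fin n =>
          StrictMono s ∧ ∀ a b, s a ≠ L b),
        (Matrix.of fun a b => C a (s b)).det *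
          (Matrix.of fun i j : Fin k ⊕ Fin M => Z (Sum.elim s L i) (finSumFinEquiv j)).det := by
  classical
  rw [twistor_expand]
  set D : (Fin k → Fin n) → ℝ := fun g =>
    (Matrix.of fun i j : Fin k ⊕ Fin M => Z (Sum.elim g L i) (finSumFinEquiv j)).det with hD
  have hzero : ∀ g : Fin k → Fin n,
      ¬ (Function.Injective g ∧ ∀ a b, g a ≠ L b) → D g = 0 := by
    intro g hg
    rw [not_and_or] at hg
    rcases hg with hg | hg
    · rw [Function.not_injective_iff] at hg
      obtain ⟨a, a', hgeq, hane⟩ := hg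
      refine Matrix.det_zero_of_row_eq (i := Sum.inl a) (j := Sum.inl a') (by simpa using hane) ?_
      funext j
      simp [hgeq]
    · push_neg at hg
      obtain ⟨a, b, hab⟩ := hg
      refine Matrix.det_zero_of_row_eq (i := Sum.inl a) (j := Sum.inr b) (by simp) ?_
      funext j
      simp [hab]
  rw [← Finset.sum_filter_of_ne
    (p := fun g : Fin k → Fin n => Function.Injective g ∧ ∀ a b, g a ≠ L b)
    (fun g _ hne => by
      by_contra hp
      exact hne (mul_eq_zero.2 (Or.inr (hzero g hp))))]
  have step2 : ∑ p ∈ ((Finset.univ.filter fun s : Fin k → Fin n =>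
          StrictMono s ∧ ∀ a b, s a ≠ L b) ×ˢ (Finset.univ : Finset (Equiv.Perm (Fin k)))),
        (∏ a, C a (p.1 (p.2 a))) * D (p.1 ∘ p.2)
      = ∑ g ∈ (Finset.univ.filter fun g : Fin k → Fin n =>
          Function.Injective g ∧ ∀ a b, g a ≠ L b),
        (∏ a, C a (g a)) * D g := by
    refine Finset.sum_bij' (fun p _ => p.1 ∘ p.2)
      (fun g _ => (g ∘ Tuple.sort g, (Tuple.sort g)⁻¹)) ?_ ?_ ?_ ?_ ?_
    · rintro ⟨s, τ⟩ hp
      rw [Finset.mem_product, Finset.mem_filter] at hp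
      obtain ⟨⟨-, hsm, havoid⟩, -⟩ := hp
      rw [Finset.mem_filter]
      exact ⟨Finset.mem_univ _, hsm.injective.comp τ.injective,
        fun a b => havoid (τ a) b⟩
    · rintro g hg
      rw [Finset.mem_filter] at hg
      obtain ⟨-, hinj, havoid⟩ := hg
      rw [Finset.mem_product, Finset.mem_filter]
      refine ⟨⟨Finset.mem_univ _, ?_, fun a b => havoid _ b⟩, Finset.mem_univ _⟩
      exact (Tuple.monotone_sort g).strictMono_of_injective
        (hinj.comp (Tuple.sort g).injective)
    · rintro ⟨s, τ⟩ hp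
      rw [Finset.mem_product, Finset.mem_filter] at hp
      obtain ⟨⟨-, hsm, -⟩, -⟩ := hp
      set g := s ∘ τ with hg
      set σ := Tuple.sort g with hσ
      have hmono : Monotone (g ∘ σ) := Tuple.monotone_sort g
      have hinj : Function.Injective (g ∘ σ) :=
        (hsm.injective.comp τ.injective).comp σ.injective
      have hsm2 : StrictMono (g ∘ ⇑σ) := hmono.strictMono_of_injective hinj
      have hρ : StrictMono (⇑(σ.trans τ)) := by
        intro x y hxy
        have : s ((σ.trans τ) x) < s ((σ.trans τ) y) := hsm2 hxy
        exact hsm.lt_iff_lt.1 this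
      have hfix : ∀ x, τ (σ x) = x := strictMono_perm_eq hρ
      have h1 : g ∘ ⇑σ = s := by
        funext x
        show s (τ (σ x)) = s x
        rw [hfix x]
      have h2 : σ⁻¹ = τ := by
        refine Equiv.ext fun x => ?_
        have := hfix (σ⁻¹ x)
        rw [Equiv.Perm.inv_def, Equiv.apply_symm_apply] at this
        exact this.symm
      simp only [Prod.mk.injEq]
      exact ⟨h1, h2⟩
    · rintro g hg
      funext x
      simp [Function.comp, Equiv.Perm.inv_def, Equiv.apply_symm_apply]
    · rintro ⟨s, τ⟩ _
      rfl
  rw [← step2, Finset.sum_product]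
  refine Finset.sum_congr rfl fun s hs => ?_
  rw [Finset.mem_filter] at hs
  obtain ⟨-, hsm, -⟩ := hs
  have hDperm : ∀ τ : Equiv.Perm (Fin k),
      D (s ∘ τ) = ((Equiv.Perm.sign τ : ℤ) : ℝ) * D s := by
    intro τ
    have hmat : (Matrix.of fun i j : Fin k ⊕ Fin M =>
          Z (Sum.elim (s ∘ τ) L i) (finSumFinEquiv j))
        = (Matrix.of fun i j : Fin k ⊕ Fin M =>
            Z (Sum.elim s L i) (finSumFinEquiv j)).submatrix
          (⇑(Equiv.sumCongr τ (Equiv.refl (Fin M)))) id := by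
      funext i j
      cases i with
      | inl a => rfl
      | inr b => rfl
    rw [hD]
    show (Matrix.of fun i j : Fin k ⊕ Fin M =>
        Z (Sum.elim (s ∘ τ) L i) (finSumFinEquiv j)).det = _
    rw [hmat, Matrix.det_permute, Equiv.Perm.sign_sumCongr]
    simp
  have hdetC : (Matrix.of fun a b => C a (s b)).det
      = ∑ τ : Equiv.Perm (Fin k), ((Equiv.Perm.sign τ : ℤ) : ℝ) * ∏ a, C a (s (τ a)) := by
    rw [← Matrix.det_transpose, Matrix.det_apply]
    refine Finset.sum_congr rfl fun τ _ => ?_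
    simp [Matrix.transpose_apply, Units.smul_def, zsmul_eq_mul]
  rw [hdetC, Finset.sum_mul]
  refine Finset.sum_congr rfl fun τ _ => ?_
  rw [hDperm τ]
  ring


end Stmt9Aux

namespace Stmt9Aux
open Finset Matrix Equiv

variable {k M n : ℕ}

lemma sumElim_injective {s : Fin k → Fin n} {L : Fin M → Fin n}
    (hs : StrictMono s) (hL : StrictMono L) (hdisj : ∀ a b, s a ≠ L b) :
    Function.Injective (Sum.elim s L) := by
  intro x y hxy
  cases x with
  | inl a =>
      cases y with
      | inl a' => exact congrArg Sum.inl (hs.injective hxy)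
      | inr b => exact absurd hxy (hdisj a b)
  | inr b =>
      cases y with
      | inl a => exact absurd hxy.symm (hdisj a b)
      | inr b' => exact congrArg Sum.inr (hL.injective hxy)

lemma D_pos (Z : Matrix (Fin n) (Fin (k + M)) ℝ) (hZ : PosMaximalMinors Z)
    {s : Fin k → Fin n} {L : Fin M → Fin n} (hs : StrictMono s) (hL : StrictMono L)
    (hdisj : ∀ a b, s a ≠ L b) :
    0 < (-1 : ℝ) ^ (∑ b : Fin M,
        ((Finset.univ : Finset (Fin k)).filter fun a => L b < s a).card) *
      (Matrix.of fun i j : Fin k ⊕ Fin M => Z (Sum.elim s L i) (finSumFinEquiv j)).det := by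
  classical
  set t : Fin (k + M) → Fin n := fun p => Sum.elim s L (finSumFinEquiv.symm p) with ht
  have hinj : Function.Injective t :=
    (sumElim_injective hs hL hdisj).comp finSumFinEquiv.symm.injective
  have hdet : (Matrix.of fun i j : Fin k ⊕ Fin M =>
      Z (Sum.elim s L i) (finSumFinEquiv j)).det = (Z.submatrix t id).det := by
    rw [← Matrix.det_submatrix_equiv_self finSumFinEquiv (Z.submatrix t id)]
    congr 1
    funext i j
    simp [ht, Matrix.submatrix_apply]
  have hZ' : ∀ f : Fin (k + M) → Fin n, StrictMono f → 0 < (Z.submatrix f id).det := by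
    intro f hf
    have : (Matrix.of fun a b => Z (f a) b) = Z.submatrix f id := rfl
    rw [← this]
    exact hZ f hf
  rw [hdet, ← inv_concat hs hL]
  exact det_pos_sign hZ' _ _ rfl hinj

lemma master (Z : Matrix (Fin n) (Fin (k + M)) ℝ) (hkM : k + M ≤ n)
    (hZ : PosMaximalMinors Z) (C : Matrix (Fin k) (Fin n) ℝ) (hC : PosRowMinors C)
    (L : Fin M → Fin n) (hL : StrictMono L) (ε : ℝ)
    (hsign : ∀ s : Fin k → Fin n, StrictMono s → (∀ a b, s a ≠ L b) →
      (-1 : ℝ) ^ (∑ b : Fin M,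
        ((Finset.univ : Finset (Fin k)).filter fun a => L b < s a).card) = ε) :
    0 < ε * twistor Z (C * Z) L := by
  classical
  rw [twistor_group, Finset.mul_sum]
  refine Finset.sum_pos (fun s hs => ?_) ?_
  · rw [Finset.mem_filter] at hs
    obtain ⟨-, hsm, havoid⟩ := hs
    have hd := D_pos Z hZ hsm hL havoid
    rw [hsign s hsm havoid] at hd
    have hc := hC s hsm
    rw [mul_left_comm]
    exact mul_pos hc hd
  · have hcard : k ≤ ((Finset.univ.image L)ᶜ : Finset (Fin n)).card := by
      rw [Finset.card_compl, Finset.card_image_of_injective _ hL.injective,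
        Finset.card_univ, Fintype.card_fin, Fintype.card_fin]
      omega
    set s₀ : Fin k → Fin n := fun a => Finset.orderEmbOfCardLe _ hcard a with hs₀
    refine ⟨s₀, Finset.mem_filter.2 ⟨Finset.mem_univ _, ?_, ?_⟩⟩
    · exact (Finset.orderEmbOfCardLe _ hcard).strictMono
    · intro a b hab
      have hmem := Finset.orderEmbOfCardLe_mem _ hcard a
      rw [Finset.mem_compl] at hmem
      apply hmem
      rw [show ((Finset.univ.image L)ᶜ : Finset (Fin n)).orderEmbOfCardLe hcard a = L b from hab]
      exact Finset.mem_image_of_mem L (Finset.mem_univ b)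

end Stmt9Aux

/-- Strict coarse boundary conditions for odd `m` (here the paper's odd `m` is `m + 1`, so
`m` is even, and `I` is a strictly increasing pair list of length `m` = paper's `m − 1`):
if the entries of `I` lie in `[2, n]` (1-indexed) then `(−1)^k ⟨Y, 1, I⟩ > 0`, and if the
entries of `I` lie in `[1, n−1]` (1-indexed) then `⟨Y, I, n⟩ > 0`, where `Y = C Z`. -/
theorem stmt9 (k m n : ℕ) (hm : Even m) (hmn : k + (m + 1) ≤ n)
    (Z : Matrix (Fin n) (Fin (k + (m + 1))) ℝ) (hZ : PosMaximalMinors Z)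
    (C : Matrix (Fin k) (Fin n) ℝ) (hC : PosRowMinors C)
    (I : Fin m → Fin n) (hI : StrictMono I) (hpair : ConsecPairs I) :
    ((∀ j, 1 ≤ (I j : ℕ)) →
        0 < (-1 : ℝ) ^ k * twistor Z (C * Z) (Fin.cons (⟨0, by omega⟩ : Fin n) I)) ∧
    ((∀ j, (I j : ℕ) ≤ n - 2) →
        0 < twistor Z (C * Z) (Fin.snoc I (⟨n - 1, by omega⟩ : Fin n))) := by
  classical
  have h0n : 0 < n := by omega
  have hn1 : n - 1 < n := by omega
  constructor
  · intro hval
    have hLmono : StrictMono (Fin.cons (⟨0, h0n⟩ : Fin n) I : Fin (m + 1) → Fin n) := by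
      intro x y hxy
      rcases Fin.eq_zero_or_eq_succ y with rfl | ⟨y', rfl⟩
      · exact absurd hxy (Fin.not_lt_zero x)
      · rcases Fin.eq_zero_or_eq_succ x with rfl | ⟨x', rfl⟩
        · simp only [Fin.cons_zero, Fin.cons_succ]
          rw [Fin.lt_def]
          have := hval y'
          simpa using by omega
        · simp only [Fin.cons_succ]
          exact hI (by rwa [Fin.succ_lt_succ_iff] at hxy)
    have key := Stmt9Aux.master (M := m + 1) Z (by omega) hZ C hC
      (Fin.cons (⟨0, h0n⟩ : Fin n) I) hLmono ((-1 : ℝ) ^ k) ?_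
    · exact key
    · intro s hsm havoid
      have h0 : ((Finset.univ : Finset (Fin k)).filter
          fun a => (Fin.cons (⟨0, h0n⟩ : Fin n) I : Fin (m+1) → Fin n) 0 < s a)
          = Finset.univ := by
        refine Finset.filter_true_of_mem fun a _ => ?_
        have hne := havoid a 0
        rw [Fin.cons_zero] at hne ⊢
        rw [Fin.lt_def]
        have hva : (s a : ℕ) ≠ 0 := by
          intro h
          exact hne (Fin.ext (by simpa using h))
        simpa using Nat.pos_of_ne_zero hva
      have hT : (∑ j : Fin m, ((Finset.univ : Finset (Fin k)).filter
          fun a => (Fin.cons (⟨0, h0n⟩ : Fin n) I : Fin (m+1) → Fin n) j.succ < s a).card)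
          % 2 = 0 := by
        refine Stmt9Aux.even_sum_of_pairs m (Nat.even_iff.1 hm) _ ?_
        intro j j' hj0 hjj
        congr 1
        ext a
        simp only [Finset.mem_filter, Finset.mem_univ, true_and, Fin.cons_succ]
        have hIc : (I j' : ℕ) = (I j : ℕ) + 1 := hpair j j' hjj hj0
        have hnea : s a ≠ I j' := by
          have := havoid a j'.succ
          rwa [Fin.cons_succ] at this
        have hnean : (s a : ℕ) ≠ (I j' : ℕ) := fun h => hnea (Fin.ext h)
        rw [Fin.lt_def, Fin.lt_def]
        omega
      have hsum : (∑ b : Fin (m + 1), ((Finset.univ : Finset (Fin k)).filter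
          fun a => (Fin.cons (⟨0, h0n⟩ : Fin n) I : Fin (m+1) → Fin n) b < s a).card)
          = k + ∑ j : Fin m, ((Finset.univ : Finset (Fin k)).filter
            fun a => (Fin.cons (⟨0, h0n⟩ : Fin n) I : Fin (m+1) → Fin n) j.succ < s a).card := by
        rw [Fin.sum_univ_succ, h0, Finset.card_univ, Fintype.card_fin]
      rw [hsum, pow_add, (Nat.even_iff.2 hT).neg_one_pow, mul_one]
  · intro hval
    have hLmono : StrictMono (Fin.snoc I (⟨n - 1, hn1⟩ : Fin n) : Fin (m + 1) → Fin n) := by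
      intro x y hxy
      rcases Fin.eq_castSucc_or_eq_last y with ⟨y', rfl⟩ | rfl
      · rcases Fin.eq_castSucc_or_eq_last x with ⟨x', rfl⟩ | rfl
        · simp only [Fin.snoc_castSucc]
          exact hI (by rwa [Fin.castSucc_lt_castSucc_iff] at hxy)
        · have := y'.isLt
          exact absurd hxy (by rw [Fin.lt_def]; simp)
      · rcases Fin.eq_castSucc_or_eq_last x with ⟨x', rfl⟩ | rfl
        · simp only [Fin.snoc_castSucc, Fin.snoc_last]
          rw [Fin.lt_def]
          have h1 := hval x'
          have h2 : 0 < m := x'.pos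
          simpa using by omega
        · exact absurd hxy (lt_irrefl _)
    have key := Stmt9Aux.master (M := m + 1) Z (by omega) hZ C hC
      (Fin.snoc I (⟨n - 1, hn1⟩ : Fin n)) hLmono 1 ?_
    · simpa using key
    · intro s hsm havoid
      have hlast : ((Finset.univ : Finset (Fin k)).filter
          fun a => (Fin.snoc I (⟨n - 1, hn1⟩ : Fin n) : Fin (m+1) → Fin n) (Fin.last m) < s a)
          = ∅ := by
        refine Finset.filter_false_of_mem fun a _ => ?_
        rw [Fin.snoc_last, Fin.lt_def]
        have := (s a).isLt
        simp only
        omega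
      have hT : (∑ j : Fin m, ((Finset.univ : Finset (Fin k)).filter
          fun a => (Fin.snoc I (⟨n - 1, hn1⟩ : Fin n) : Fin (m+1) → Fin n) j.castSucc < s a).card)
          % 2 = 0 := by
        refine Stmt9Aux.even_sum_of_pairs m (Nat.even_iff.1 hm) _ ?_
        intro j j' hj0 hjj
        congr 1
        ext a
        simp only [Finset.mem_filter, Finset.mem_univ, true_and, Fin.snoc_castSucc]
        have hIc : (I j' : ℕ) = (I j : ℕ) + 1 := hpair j j' hjj hj0
        have hnea : s a ≠ I j' := by
          have := havoid a j'.castSucc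
          rwa [Fin.snoc_castSucc] at this
        have hnean : (s a : ℕ) ≠ (I j' : ℕ) := fun h => hnea (Fin.ext h)
        rw [Fin.lt_def, Fin.lt_def]
        omega
      have hsum : (∑ b : Fin (m + 1), ((Finset.univ : Finset (Fin k)).filter
          fun a => (Fin.snoc I (⟨n - 1, hn1⟩ : Fin n) : Fin (m+1) → Fin n) b < s a).card)
          = ∑ j : Fin m, ((Finset.univ : Finset (Fin k)).filter
            fun a => (Fin.snoc I (⟨n - 1, hn1⟩ : Fin n) : Fin (m+1) → Fin n) j.castSucc < s a).card := by
        rw [Fin.sum_univ_castSucc, hlast, Finset.card_empty, add_zero]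
      rw [hsum, (Nat.even_iff.2 hT).neg_one_pow]
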